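/- Let p ≥ 0 be an integer and let κ* > 0 satisfy J_p(κ*) = 0 and J_p'(κ*) ≠ 0. Define, for κ in a punctured neighborhood of κ* on which J_p(κ) ≠ 0, the function g_p(κ) = κ·J_p'(κ)²·(κ − κ*)²/J_p(κ)². Then g_p(κ) → κ* as κ → κ*, and moreover lim_{κ→κ*} (g_p(κ) − κ*)/(κ − κ*)² = (−8·(κ*)² + 8·p² + 1)/(12·κ*); equivalently, the analytic extension of g_p to κ* has value κ*, first derivative 0, and second derivative (−8·(κ*)² + 8·p² + 1)/(6·κ*) at κ*. -/

import Mathlib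

open Complex Real Filter Set

/-- Bessel function of the first kind of integer order `p`. -/
noncomputable def besselJ (p : ℕ) (z : ℂ) : ℂ :=
  ∑' m : ℕ, ((-1 : ℂ) ^ m / ((Nat.factorial m : ℂ) * (Nat.factorial (m + p) : ℂ)))
    * (z / 2) ^ (2 * m + p)

/-- Derivative of the Bessel function. -/
noncomputable def besselJ' (p : ℕ) (z : ℂ) : ℂ := deriv (besselJ p) z

/-- The ITE determinant function `F_p(κ, n)`. -/
noncomputable def Fp (p : ℕ) (κ : ℂ) (n : ℝ) : ℂ :=
  κ * (besselJ' p κ * besselJ p ((Real.sqrt n : ℂ) * κ)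
    - (Real.sqrt n : ℂ) * besselJ p κ * besselJ' p ((Real.sqrt n : ℂ) * κ))

noncomputable def bc (p m : ℕ) : ℂ :=
  (-1 : ℂ) ^ m / ((Nat.factorial m : ℂ) * (Nat.factorial (m + p) : ℂ))
noncomputable def ub (p : ℕ) (R : ℝ) (m : ℕ) : ℝ :=
  ((p : ℝ) + 2) ^ 2 * ((m : ℝ) + 1) ^ 2 * R ^ (2 * m + p) / (Nat.factorial m : ℝ)

lemma norm_zhalf_pow_le {z : ℂ} {R : ℝ} (hz : ‖z‖ ≤ R) (hR : 1 ≤ R) {e n : ℕ} (he : e ≤ n) :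
    ‖(z / 2) ^ e‖ ≤ R ^ n := by
  have h0 : ‖z / 2‖ ≤ R := by
    rw [norm_div, Complex.norm_ofNat]
    nlinarith [norm_nonneg z]
  calc ‖(z/2)^e‖ = ‖z/2‖^e := norm_pow _ _
    _ ≤ R^e := pow_le_pow_left₀ (norm_nonneg _) h0 e
    _ ≤ R^n := pow_le_pow_right₀ hR he

lemma norm_bc_le (p m : ℕ) : ‖bc p m‖ ≤ 1 / (Nat.factorial m : ℝ) := by
  have h : ‖bc p m‖ = 1 / ((Nat.factorial m : ℝ) * ((Nat.factorial (m+p)) : ℝ)) := by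
    simp [bc, norm_div]
  rw [h]
  have h1 : (1:ℝ) ≤ ((m+p).factorial : ℝ) := by exact_mod_cast (m+p).factorial_pos
  apply one_div_le_one_div_of_le (by positivity)
  exact le_mul_of_one_le_right (by positivity) h1

lemma coeff_le (p m : ℕ) : ((2*m+p : ℕ) : ℝ) ≤ ((p:ℝ)+2)*((m:ℝ)+1) := by
  push_cast; nlinarith [Nat.cast_nonneg (α := ℝ) m, Nat.cast_nonneg (α := ℝ) p]

noncomputable def T0 (p m : ℕ) (z : ℂ) : ℂ := bc p m * (z / 2) ^ (2 * m + p)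
noncomputable def T1 (p m : ℕ) (z : ℂ) : ℂ :=
  bc p m * ((2 * m + p : ℕ) * (z / 2) ^ (2 * m + p - 1) * (1 / 2))
noncomputable def T2 (p m : ℕ) (z : ℂ) : ℂ :=
  bc p m * (2 * m + p : ℕ) * (1 / 2) * ((2 * m + p - 1 : ℕ) * (z / 2) ^ (2 * m + p - 2) * (1 / 2))

lemma one_le_A (p m : ℕ) : (1:ℝ) ≤ ((p:ℝ)+2)*((m:ℝ)+1) := by
  nlinarith [Nat.cast_nonneg (α := ℝ) m, Nat.cast_nonneg (α := ℝ) p]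

lemma norm_T0_le (p m : ℕ) {z : ℂ} {R : ℝ} (hz : ‖z‖ ≤ R) (hR : 1 ≤ R) :
    ‖T0 p m z‖ ≤ ub p R m := by
  have h1 := one_le_A p m
  have hRn : (0:ℝ) ≤ R^(2*m+p) := by positivity
  calc ‖T0 p m z‖ = ‖bc p m‖ * ‖(z/2)^(2*m+p)‖ := by rw [T0, norm_mul]
    _ ≤ (1/(m.factorial:ℝ)) * R^(2*m+p) :=
        mul_le_mul (norm_bc_le p m) (norm_zhalf_pow_le hz hR le_rfl) (norm_nonneg _) (by positivity)
    _ = R^(2*m+p) / (m.factorial:ℝ) := by ring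
    _ ≤ ub p R m := by
        rw [ub]; gcongr ?_ / _
        nlinarith [mul_nonneg (by nlinarith [h1] : (0:ℝ) ≤ ((p:ℝ)+2)^2*((m:ℝ)+1)^2 - 1) hRn]

lemma norm_T1_le (p m : ℕ) {z : ℂ} {R : ℝ} (hz : ‖z‖ ≤ R) (hR : 1 ≤ R) :
    ‖T1 p m z‖ ≤ ub p R m := by
  have h1 := one_le_A p m
  have hRn : (0:ℝ) ≤ R^(2*m+p) := by positivity
  calc ‖T1 p m z‖
      = ‖bc p m‖ * (((2*m+p:ℕ):ℝ) * ‖(z/2)^(2*m+p-1)‖ * (1/2)) := by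
        rw [T1, norm_mul, norm_mul, norm_mul, Complex.norm_natCast]
        norm_num
    _ ≤ (1/(m.factorial:ℝ)) * ((((p:ℝ)+2)*((m:ℝ)+1)) * R^(2*m+p) * (1/2)) := by
        gcongr
        · exact norm_bc_le p m
        · exact coeff_le p m
        · exact norm_zhalf_pow_le hz hR (Nat.sub_le _ 1)
    _ = (((p:ℝ)+2)*((m:ℝ)+1)) * R^(2*m+p) * (1/2) / (m.factorial:ℝ) := by ring
    _ ≤ ub p R m := by
        rw [ub]; gcongr ?_ / _
        nlinarith [mul_nonneg (by nlinarith [h1] :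
          (0:ℝ) ≤ ((p:ℝ)+2)^2*((m:ℝ)+1)^2 - ((p:ℝ)+2)*((m:ℝ)+1)*(1/2)) hRn]

lemma norm_T2_le (p m : ℕ) {z : ℂ} {R : ℝ} (hz : ‖z‖ ≤ R) (hR : 1 ≤ R) :
    ‖T2 p m z‖ ≤ ub p R m := by
  have h1 := one_le_A p m
  have hRn : (0:ℝ) ≤ R^(2*m+p) := by positivity
  have hc2 : ((2*m+p-1:ℕ):ℝ) ≤ ((p:ℝ)+2)*((m:ℝ)+1) := by
    refine le_trans ?_ (coeff_le p m)
    exact_mod_cast Nat.cast_le.mpr (Nat.sub_le _ 1)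
  calc ‖T2 p m z‖
      = ‖bc p m‖ * (((2*m+p:ℕ):ℝ)) * (1/2) * (((2*m+p-1:ℕ):ℝ) * ‖(z/2)^(2*m+p-2)‖ * (1/2)) := by
        rw [T2, norm_mul, norm_mul, norm_mul, norm_mul, norm_mul, Complex.norm_natCast,
          Complex.norm_natCast]
        norm_num
    _ ≤ (1/(m.factorial:ℝ)) * ((((p:ℝ)+2)*((m:ℝ)+1))) * (1/2) *
          ((((p:ℝ)+2)*((m:ℝ)+1)) * R^(2*m+p) * (1/2)) := by
        gcongr
        · exact norm_bc_le p m
        · exact coeff_le p m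
        · exact norm_zhalf_pow_le hz hR (Nat.sub_le _ 2)
    _ = (((p:ℝ)+2)*((m:ℝ)+1)) * (((p:ℝ)+2)*((m:ℝ)+1)) * R^(2*m+p) * (1/4) / (m.factorial:ℝ) := by
        ring
    _ ≤ ub p R m := by
        rw [ub]; gcongr ?_ / _
        nlinarith [mul_nonneg (by nlinarith [h1] :
          (0:ℝ) ≤ ((p:ℝ)+2)^2*((m:ℝ)+1)^2 - ((p:ℝ)+2)*((m:ℝ)+1)*(((p:ℝ)+2)*((m:ℝ)+1))*(1/4)) hRn]

lemma hasDerivAt_T0 (p m : ℕ) (z : ℂ) : HasDerivAt (T0 p m) (T1 p m z) z := by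
  have h := (((hasDerivAt_id z).div_const (2 : ℂ)).pow (2 * m + p)).const_mul (bc p m)
  show HasDerivAt (fun y => bc p m * (y / 2) ^ (2 * m + p)) (T1 p m z) z
  simpa [T1] using h

lemma hasDerivAt_T1 (p m : ℕ) (z : ℂ) : HasDerivAt (T1 p m) (T2 p m z) z := by
  have hfun : T1 p m = fun w => (bc p m * (2 * m + p : ℕ) * (1 / 2)) * (w / 2) ^ (2 * m + p - 1) := by
    funext w; unfold T1; ring
  rw [hfun]
  have h := (((hasDerivAt_id z).div_const (2 : ℂ)).pow (2 * m + p - 1)).const_mul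
    (bc p m * (2 * m + p : ℕ) * (1 / 2))
  have he : 2 * m + p - 1 - 1 = 2 * m + p - 2 := by omega
  simpa [T2, he, mul_assoc] using h

lemma summable_ub (p : ℕ) (R : ℝ) (hR : 0 ≤ R) : Summable (ub p R) := by
  have key : Summable (fun m : ℕ => (((p : ℝ) + 2) ^ 2 * 4 * R ^ p) * ((4 * R ^ 2) ^ m / (Nat.factorial m : ℝ))) :=
    (Real.summable_pow_div_factorial (4 * R ^ 2)).mul_left _
  apply Summable.of_nonneg_of_le (fun m => by unfold ub; positivity) _ key
  intro m
  have h1 : ((m : ℝ) + 1) ^ 2 ≤ 4 * 4 ^ m := by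
    have h2 : (m : ℝ) + 1 ≤ 2 ^ (m + 1) := by
      exact_mod_cast (Nat.lt_two_pow_self (n := m + 1)).le.trans_eq' (by push_cast; ring)
    calc ((m : ℝ) + 1) ^ 2 ≤ (2 ^ (m + 1)) ^ 2 := by gcongr
      _ = 4 * 4 ^ m := by rw [← pow_mul, show (m+1)*2 = 2*m+2 by ring, pow_add, pow_mul]; ring
  calc ub p R m = ((p : ℝ) + 2) ^ 2 * ((m : ℝ) + 1) ^ 2 * R ^ (2 * m + p) / (Nat.factorial m : ℝ) := rfl
    _ ≤ ((p : ℝ) + 2) ^ 2 * (4 * 4 ^ m) * R ^ (2 * m + p) / (Nat.factorial m : ℝ) := by gcongr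
    _ = (((p : ℝ) + 2) ^ 2 * 4 * R ^ p) * ((4 * R ^ 2) ^ m / (Nat.factorial m : ℝ)) := by
        rw [mul_pow, pow_add, pow_mul]; ring



lemma summable_T0 (p : ℕ) (z : ℂ) : Summable (fun m => T0 p m z) := by
  apply Summable.of_norm_bounded (g := ub p (‖z‖+1)) (summable_ub p _ (by positivity))
  exact fun m => norm_T0_le p m (by linarith [norm_nonneg z]) (by linarith [norm_nonneg z])

lemma summable_T1 (p : ℕ) (z : ℂ) : Summable (fun m => T1 p m z) := by
  apply Summable.of_norm_bounded (g := ub p (‖z‖+1)) (summable_ub p _ (by positivity))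
  exact fun m => norm_T1_le p m (by linarith [norm_nonneg z]) (by linarith [norm_nonneg z])

lemma summable_T2 (p : ℕ) (z : ℂ) : Summable (fun m => T2 p m z) := by
  apply Summable.of_norm_bounded (g := ub p (‖z‖+1)) (summable_ub p _ (by positivity))
  exact fun m => norm_T2_le p m (by linarith [norm_nonneg z]) (by linarith [norm_nonneg z])

lemma hasDerivAt_tsum_T0 (p : ℕ) (z : ℂ) :
    HasDerivAt (fun w => ∑' m, T0 p m w) (∑' m, T1 p m z) z := by
  set R : ℝ := ‖z‖ + 2 with hRdef
  have hR1 : 1 ≤ R := by rw [hRdef]; linarith [norm_nonneg z]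
  apply hasDerivAt_tsum_of_isPreconnected (u := ub p R) (t := Metric.ball (0:ℂ) R)
    (y₀ := (0:ℂ))
    (summable_ub p R (by linarith)) Metric.isOpen_ball (convex_ball (0:ℂ) R).isPreconnected
    (fun m y _ => hasDerivAt_T0 p m y)
    (fun m y hy => norm_T1_le p m (le_of_lt (mem_ball_zero_iff.mp hy)) hR1)
    (by rw [mem_ball_zero_iff]; simp only [norm_zero]; rw [hRdef]; linarith [norm_nonneg z])
    (summable_T0 p 0)
    (by rw [mem_ball_zero_iff, hRdef]; linarith)

lemma hasDerivAt_tsum_T1 (p : ℕ) (z : ℂ) :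
    HasDerivAt (fun w => ∑' m, T1 p m w) (∑' m, T2 p m z) z := by
  set R : ℝ := ‖z‖ + 2 with hRdef
  have hR1 : 1 ≤ R := by rw [hRdef]; linarith [norm_nonneg z]
  apply hasDerivAt_tsum_of_isPreconnected (u := ub p R) (t := Metric.ball (0:ℂ) R)
    (y₀ := (0:ℂ))
    (summable_ub p R (by linarith)) Metric.isOpen_ball (convex_ball (0:ℂ) R).isPreconnected
    (fun m y _ => hasDerivAt_T1 p m y)
    (fun m y hy => norm_T2_le p m (le_of_lt (mem_ball_zero_iff.mp hy)) hR1)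
    (by rw [mem_ball_zero_iff]; simp only [norm_zero]; rw [hRdef]; linarith [norm_nonneg z])
    (summable_T1 p 0)
    (by rw [mem_ball_zero_iff, hRdef]; linarith)

lemma besselJ_eq_tsum (p : ℕ) : besselJ p = fun z => ∑' m, T0 p m z := rfl

lemma hasDerivAt_besselJ (p : ℕ) (z : ℂ) :
    HasDerivAt (besselJ p) (∑' m, T1 p m z) z := by
  rw [besselJ_eq_tsum]; exact hasDerivAt_tsum_T0 p z

lemma besselJ'_eq (p : ℕ) (z : ℂ) : besselJ' p z = ∑' m, T1 p m z :=
  (hasDerivAt_besselJ p z).deriv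

lemma differentiable_besselJ (p : ℕ) : Differentiable ℂ (besselJ p) :=
  fun z => (hasDerivAt_besselJ p z).differentiableAt

lemma hasDerivAt_besselJ' (p : ℕ) (z : ℂ) :
    HasDerivAt (besselJ' p) (∑' m, T2 p m z) z := by
  have h : besselJ' p = fun w => ∑' m, T1 p m w := funext (besselJ'_eq p)
  rw [h]; exact hasDerivAt_tsum_T1 p z

lemma besselJ''_eq (p : ℕ) (z : ℂ) : deriv (besselJ' p) z = ∑' m, T2 p m z :=
  (hasDerivAt_besselJ' p z).deriv

lemma differentiable_besselJ' (p : ℕ) : Differentiable ℂ (besselJ' p) :=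
  fun z => (hasDerivAt_besselJ' p z).differentiableAt

lemma content_A (p m : ℕ) (z : ℂ) :
    z^2 * T2 p m z + z * T1 p m z - (p:ℂ)^2 * T0 p m z
      = bc p m * ((((2*m+p : ℕ)):ℂ)^2 - (p:ℂ)^2) * (z/2)^(2*m+p) := by
  rcases Nat.lt_or_ge (2*m+p) 2 with hlt | hge
  case inr =>
    obtain ⟨k, hk⟩ : ∃ k, 2*m+p = k+2 := ⟨2*m+p-2, by omega⟩
    have e1 : 2*m+p-1 = k+1 := by omega
    have e2 : 2*m+p-2 = k := by omega
    simp only [T0, T1, T2, e1, e2, hk]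
    have hzw : z = 2*(z/2) := by ring
    rw [hzw]
    push_cast
    ring
  case inl =>
    rcases (by omega : 2*m+p = 1 ∨ 2*m+p = 0) with h1 | h0
    · have hm : m = 0 := by omega
      have hp : p = 1 := by omega
      subst hm; subst hp
      norm_num [T0, T1, T2]
      ring
    · have hm : m = 0 := by omega
      have hp : p = 0 := by omega
      subst hm; subst hp
      norm_num [T0, T1, T2]

lemma bc_rec (p m : ℕ) :
    bc p (m+1) * ((2*(m:ℂ)+2+(p:ℂ))^2 - (p:ℂ)^2) = -4 * bc p m := by
  unfold bc
  have h1 : m+1+p = (m+p)+1 := by omega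
  rw [Nat.factorial_succ, h1, Nat.factorial_succ]
  have hf1 : ((Nat.factorial m : ℂ)) ≠ 0 := Nat.cast_ne_zero.mpr (Nat.factorial_ne_zero _)
  have hf2 : ((Nat.factorial (m+p) : ℂ)) ≠ 0 := Nat.cast_ne_zero.mpr (Nat.factorial_ne_zero _)
  have hm1 : ((m:ℂ)+1) ≠ 0 := Nat.cast_add_one_ne_zero m
  have hmp1 : ((m:ℂ)+(p:ℂ)+1) ≠ 0 := by
    have := Nat.cast_add_one_ne_zero (R := ℂ) (m+p)
    push_cast at this; exact this
  push_cast
  field_simp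
  ring

lemma content_B (p m : ℕ) (z : ℂ) :
    bc p (m+1) * ((((2*(m+1)+p : ℕ)):ℂ)^2 - (p:ℂ)^2) * (z/2)^(2*(m+1)+p)
      = -(z^2 * T0 p m z) := by
  have e : 2*(m+1)+p = (2*m+p)+2 := by omega
  rw [e]
  have hbc : bc p (m+1) * ((2*(m:ℂ)+2+(p:ℂ))^2 - (p:ℂ)^2) = -4 * bc p m := bc_rec p m
  have e2 : ((((2*m+p)+2 : ℕ)):ℂ) = 2*(m:ℂ)+2+(p:ℂ) := by push_cast; ring
  rw [e2, pow_add]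
  rw [T0]
  calc bc p (m+1) * ((2*(m:ℂ)+2+(p:ℂ))^2 - (p:ℂ)^2) * ((z/2)^(2*m+p) * (z/2)^2)
      = (-4 * bc p m) * ((z/2)^(2*m+p) * (z/2)^2) := by rw [hbc]
    _ = -(z^2 * (bc p m * (z/2)^(2*m+p))) := by ring

lemma besselJ_ode (p : ℕ) (z : ℂ) :
    z^2 * deriv (besselJ' p) z + z * besselJ' p z + (z^2 - (p:ℂ)^2) * besselJ p z = 0 := by
  rw [besselJ''_eq, besselJ'_eq, show besselJ p z = ∑' m, T0 p m z from rfl]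
  rw [← tsum_mul_left, ← tsum_mul_left, ← tsum_mul_left]
  have hS2 := (summable_T2 p z).mul_left (z^2)
  have hS1 := (summable_T1 p z).mul_left z
  have hS0 := (summable_T0 p z).mul_left ((p:ℂ)^2)
  have hW := (summable_T0 p z).mul_left (z^2)
  have hS : Summable (fun m => z^2 * T2 p m z + z * T1 p m z - (p:ℂ)^2 * T0 p m z) :=
    (hS2.add hS1).sub hS0
  have hterm : ∀ m, z^2 * T2 p m z + z * T1 p m z + (z^2 - (p:ℂ)^2) * T0 p m z
      = (z^2 * T2 p m z + z * T1 p m z - (p:ℂ)^2 * T0 p m z) + z^2 * T0 p m z := by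
    intro m; ring
  have hS0' := (summable_T0 p z).mul_left (z^2 - (p:ℂ)^2)
  rw [← Summable.tsum_add hS2 hS1, ← Summable.tsum_add (hS2.add hS1) hS0']
  rw [tsum_congr hterm, Summable.tsum_add hS hW]
  have hkey : ∑' m, (z^2 * T2 p m z + z * T1 p m z - (p:ℂ)^2 * T0 p m z)
      = -∑' m, z^2 * T0 p m z := by
    rw [Summable.tsum_eq_zero_add hS]
    have h0 : z^2 * T2 p 0 z + z * T1 p 0 z - (p:ℂ)^2 * T0 p 0 z = 0 := by
      rw [content_A p 0 z]
      norm_num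
    rw [h0, zero_add]
    have hsucc : ∀ m, z^2 * T2 p (m+1) z + z * T1 p (m+1) z - (p:ℂ)^2 * T0 p (m+1) z
        = -(z^2 * T0 p m z) := by
      intro m
      rw [content_A p (m+1) z]
      exact content_B p m z
    rw [tsum_congr hsucc, tsum_neg]
  rw [hkey]
  ring

lemma entire_deriv {f : ℂ → ℂ} (hf : Differentiable ℂ f) : Differentiable ℂ (deriv f) := by
  have h1 : Differentiable ℂ (fderiv ℂ f) := fun z => ((hf.analyticAt z).fderiv).differentiableAt
  have h2 : deriv f = fun z => (fderiv ℂ f z : ℂ →L[ℂ] ℂ) 1 := by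
    funext z; rw [← fderiv_apply_one_eq_deriv]
  rw [h2]
  exact fun z => ((ContinuousLinearMap.apply ℂ ℂ (1:ℂ)).differentiable.comp h1) z

lemma entire_dslope {f : ℂ → ℂ} (hf : Differentiable ℂ f) (c : ℂ) :
    Differentiable ℂ (dslope f c) := by
  intro z
  rcases eq_or_ne z c with rfl | hz
  · obtain ⟨q, hq⟩ := hf.analyticAt z
    have : AnalyticAt ℂ (dslope f z) z := ⟨_, hq.has_fpower_series_dslope_fslope⟩
    exact this.differentiableAt
  · have hev : ∀ᶠ w in nhds z, dslope f c w = (w - c)⁻¹ * (f w - f c) := by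
      filter_upwards [eventually_ne_nhds hz] with w hw
      rw [dslope_of_ne f hw, slope_def_field, div_eq_inv_mul]
    have hd : DifferentiableAt ℂ (fun w => (w - c)⁻¹ * (f w - f c)) z := by
      apply DifferentiableAt.mul
      · exact (differentiableAt_id.sub_const c).inv (sub_ne_zero.mpr hz)
      · exact (hf z).sub_const (f c)
    exact (Filter.EventuallyEq.differentiableAt_iff hev).mpr hd

lemma dslope_deriv_expand {g : ℂ → ℂ} (hg : Differentiable ℂ g) (c : ℂ) (z : ℂ) :
    deriv g z = dslope g c z + (z - c) * deriv (dslope g c) z := by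
  have hd := entire_dslope hg c
  have hfun : g = fun w => g c + (w - c) * dslope g c w := by
    funext w
    have hs := sub_smul_dslope g c w
    rw [smul_eq_mul] at hs
    linear_combination -hs
  have hh : HasDerivAt (fun w => g c + (w - c) * dslope g c w)
      (0 + (1 * dslope g c z + (z - c) * deriv (dslope g c) z)) z :=
    (hasDerivAt_const z (g c)).add (((hasDerivAt_id z).sub_const c).mul (hd z).hasDerivAt)
  calc deriv g z = deriv (fun w => g c + (w - c) * dslope g c w) z := by conv_lhs => rw [hfun]
    _ = 0 + (1 * dslope g c z + (z - c) * deriv (dslope g c) z) := hh.deriv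
    _ = dslope g c z + (z - c) * deriv (dslope g c) z := by ring

lemma main_aux {f h₁ h₂ H : ℂ → ℂ} {κ a b : ℂ}
    (hκ0 : κ ≠ 0) (ha : a ≠ 0)
    (dh₁ : Differentiable ℂ h₁) (dh₂ : Differentiable ℂ h₂) (dH : Differentiable ℂ H)
    (hdf : Differentiable ℂ (deriv f))
    (h1κ : h₁ κ = a)
    (hH2 : deriv h₂ κ = H κ)
    (I1 : ∀ z, f z = (z - κ) * h₁ z)
    (I2 : ∀ z, h₁ z = a + (z - κ) * h₂ z)
    (E : ∀ z, deriv f z = a + 2*(z-κ)*h₂ z + (z-κ)^2 * H z)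
    (rel1 : 2 * κ * h₂ κ = -a)
    (rel2 : 6 * κ^2 * H κ = b * a) :
    Filter.Tendsto (fun z : ℂ => z * (deriv f z)^2 * (z - κ)^2 / (f z)^2)
      (nhdsWithin κ {κ}ᶜ) (nhds κ) ∧
    Filter.Tendsto (fun z : ℂ => (z * (deriv f z)^2 * (z - κ)^2 / (f z)^2 - κ) / (z - κ)^2)
      (nhdsWithin κ {κ}ᶜ) (nhds ((8*b - 15)/(12*κ))) := by
  have hdfκ : deriv f κ = a := by rw [E κ]; ring
  have hne : ∀ᶠ z in nhds κ, h₁ z ≠ 0 := (dh₁ κ).continuousAt.eventually_ne (h1κ ▸ ha)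
  have hev : (fun z : ℂ => z * (deriv f z)^2 * (z - κ)^2 / (f z)^2)
      =ᶠ[nhdsWithin κ {κ}ᶜ] (fun z : ℂ => z * (deriv f z)^2 / (h₁ z)^2) := by
    filter_upwards [hne.filter_mono nhdsWithin_le_nhds, self_mem_nhdsWithin] with z hz1 hz2
    have hzκ : z - κ ≠ 0 := sub_ne_zero.mpr hz2
    rw [I1 z, mul_pow]
    field_simp
  have hcontG : ContinuousAt (fun z : ℂ => z * (deriv f z)^2 / (h₁ z)^2) κ := by
    apply ContinuousAt.div
    · exact continuousAt_id.mul ((hdf κ).continuousAt.pow 2)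
    · exact (dh₁ κ).continuousAt.pow 2
    · rw [h1κ]; exact pow_ne_zero 2 ha
  have hGκ : κ * (deriv f κ)^2 / (h₁ κ)^2 = κ := by
    rw [hdfκ, h1κ]; field_simp
  constructor
  · apply Filter.Tendsto.congr' hev.symm
    have := hcontG.continuousWithinAt (s := {κ}ᶜ)
    rw [ContinuousWithinAt] at this
    rw [hGκ] at this
    exact this
  · -- second limit
    set M : ℂ → ℂ := fun z => κ*((h₂ z + (z-κ)*H z)*(2*a + 3*(z-κ)*h₂ z + (z-κ)^2*H z))
      + (a + 2*(z-κ)*h₂ z + (z-κ)^2*H z)^2 with hMdef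
    have key : ∀ z, z * (deriv f z)^2 - κ * (h₁ z)^2 = (z-κ) * M z := by
      intro z
      show z * (deriv f z)^2 - κ * (h₁ z)^2 = (z-κ) *
        (κ*((h₂ z + (z-κ)*H z)*(2*a + 3*(z-κ)*h₂ z + (z-κ)^2*H z))
          + (a + 2*(z-κ)*h₂ z + (z-κ)^2*H z)^2)
      rw [E z, I2 z]
      ring
    have hMκ : M κ = 0 := by
      show κ*((h₂ κ + (κ-κ)*H κ)*(2*a + 3*(κ-κ)*h₂ κ + (κ-κ)^2*H κ))
        + (a + 2*(κ-κ)*h₂ κ + (κ-κ)^2*H κ)^2 = 0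
      linear_combination a * rel1
    have h1d : HasDerivAt (fun w : ℂ => w - κ) 1 κ := (hasDerivAt_id κ).sub_const κ
    have hh₂ : HasDerivAt h₂ (deriv h₂ κ) κ := (dh₂ κ).hasDerivAt
    have hH : HasDerivAt H (deriv H κ) κ := (dH κ).hasDerivAt
    have P1 : HasDerivAt (fun w => h₂ w + (w-κ)*H w)
        (deriv h₂ κ + (1*H κ + (κ-κ)*deriv H κ)) κ := hh₂.add (h1d.mul hH)
    have P2 : HasDerivAt (fun w => 2*a + 3*(w-κ)*h₂ w + (w-κ)^2*H w)
        (0 + (3*1*h₂ κ + 3*(κ-κ)*deriv h₂ κ) + ((2:ℕ)*(κ-κ)^1*1*H κ + (κ-κ)^2*deriv H κ)) κ :=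
      ((hasDerivAt_const κ (2*a)).add ((h1d.const_mul 3).mul hh₂)).add ((h1d.pow 2).mul hH)
    have P3 : HasDerivAt (fun w => a + 2*(w-κ)*h₂ w + (w-κ)^2*H w)
        (0 + (2*1*h₂ κ + 2*(κ-κ)*deriv h₂ κ) + ((2:ℕ)*(κ-κ)^1*1*H κ + (κ-κ)^2*deriv H κ)) κ :=
      ((hasDerivAt_const κ a).add ((h1d.const_mul 2).mul hh₂)).add ((h1d.pow 2).mul hH)
    have hMd := ((P1.mul P2).const_mul κ).add (P3.pow 2)
    have hD : κ * ((deriv h₂ κ + (1*H κ + (κ-κ)*deriv H κ)) * ((2*a + 3*(κ-κ)*h₂ κ + (κ-κ)^2*H κ))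
          + (h₂ κ + (κ-κ)*H κ) * (0 + (3*1*h₂ κ + 3*(κ-κ)*deriv h₂ κ) + ((2:ℕ)*(κ-κ)^1*1*H κ + (κ-κ)^2*deriv H κ)))
          + (2:ℕ)*(a + 2*(κ-κ)*h₂ κ + (κ-κ)^2*H κ)^1
            *(0 + (2*1*h₂ κ + 2*(κ-κ)*deriv h₂ κ) + ((2:ℕ)*(κ-κ)^1*1*H κ + (κ-κ)^2*deriv H κ))
        = (8*b - 15) * a^2 / (12 * κ) := by
      rw [hH2]
      field_simp
      linear_combination (8*a)*rel2 + (18*κ*h₂ κ + 15*a)*rel1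
    have hMd2 : HasDerivAt M ((8*b - 15) * a^2 / (12 * κ)) κ := by
      rw [← hD]; exact hMd
    have hsl : Filter.Tendsto (fun z : ℂ => M z / (z - κ)) (nhdsWithin κ {κ}ᶜ)
        (nhds ((8*b - 15) * a^2 / (12 * κ))) := by
      have h := hasDerivAt_iff_tendsto_slope.mp hMd2
      refine h.congr fun z => ?_
      rw [slope_def_field, hMκ, sub_zero]
    have hinv : Filter.Tendsto (fun z : ℂ => ((h₁ z)^2)⁻¹) (nhdsWithin κ {κ}ᶜ)
        (nhds ((a^2)⁻¹)) := by
      have hc : ContinuousAt (fun z : ℂ => ((h₁ z)^2)⁻¹) κ :=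
        ((dh₁ κ).continuousAt.pow 2).inv₀ (pow_ne_zero 2 (h1κ ▸ ha))
      have h2 := hc.continuousWithinAt (s := {κ}ᶜ)
      rw [ContinuousWithinAt] at h2
      rw [h1κ] at h2
      exact h2
    have hprod := hsl.mul hinv
    have hval : (8*b - 15) * a^2 / (12 * κ) * (a^2)⁻¹ = (8*b-15)/(12*κ) := by
      field_simp
    rw [hval] at hprod
    apply Filter.Tendsto.congr' _ hprod
    filter_upwards [hne.filter_mono nhdsWithin_le_nhds, self_mem_nhdsWithin] with z hz1 hz2
    have hzκ : z - κ ≠ 0 := sub_ne_zero.mpr hz2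
    have hz1' : a + (z - κ) * h₂ z ≠ 0 := by rw [← I2 z]; exact hz1
    rw [I1 z, mul_pow, E z, I2 z]
    field_simp
    ring

lemma rels_aux {g h₂ H : ℂ → ℂ} {κ a c : ℂ} (hκ0 : κ ≠ 0)
    (hg : Differentiable ℂ g) (hdg : Differentiable ℂ (deriv g))
    (hdg2 : Differentiable ℂ (deriv (deriv g)))
    (dh₂ : Differentiable ℂ h₂) (dH : Differentiable ℂ H) (dH2 : Differentiable ℂ (deriv H))
    (hgκ : g κ = 0) (haκ : deriv g κ = a)
    (hH2 : ∀ z, deriv h₂ z = H z)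
    (E : ∀ z, deriv g z = a + 2*(z-κ)*h₂ z + (z-κ)^2 * H z)
    (ode : ∀ z, z^2 * deriv (deriv g) z + z * deriv g z + (z^2 - c) * g z = 0) :
    2 * κ * h₂ κ = -a ∧ 6 * κ^2 * H κ = (2 + c - κ^2) * a := by
  have hF2 : ∀ z, deriv (deriv g) z = 2*h₂ z + 4*(z-κ)*H z + (z-κ)^2 * deriv H z := by
    intro z
    have hfun : deriv g = fun w => a + 2*(w-κ)*h₂ w + (w-κ)^2*H w := funext E
    rw [hfun]
    have Q : HasDerivAt (fun w => a + 2*(w-κ)*h₂ w + (w-κ)^2*H w)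
        (0 + (2*1*h₂ z + 2*(z-κ)*deriv h₂ z) + ((2:ℕ)*(z-κ)^1*1*H z + (z-κ)^2*deriv H z)) z :=
      ((hasDerivAt_const z a).add
          ((((hasDerivAt_id z).sub_const κ).const_mul 2).mul (dh₂ z).hasDerivAt)).add
        ((((hasDerivAt_id z).sub_const κ).pow 2).mul (dH z).hasDerivAt)
    rw [Q.deriv, hH2 z]
    ring
  have hF2κ : deriv (deriv g) κ = 2 * h₂ κ := by rw [hF2 κ]; ring
  have rel1 : 2 * κ * h₂ κ = -a := by
    have ho := ode κ
    rw [hF2κ, haκ, hgκ] at ho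
    have h' : κ * (2*κ*h₂ κ + a) = 0 := by linear_combination ho
    rcases mul_eq_zero.mp h' with h | h
    · exact absurd h hκ0
    · linear_combination h
  refine ⟨rel1, ?_⟩
  have hF3 : deriv (deriv (deriv g)) κ = 6 * H κ := by
    have hfun2 : deriv (deriv g) = fun w => 2*h₂ w + 4*(w-κ)*H w + (w-κ)^2*deriv H w :=
      funext hF2
    rw [hfun2]
    have Q : HasDerivAt (fun w => 2*h₂ w + 4*(w-κ)*H w + (w-κ)^2*deriv H w)
        (2*deriv h₂ κ + (4*1*H κ + 4*(κ-κ)*deriv H κ)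
          + ((2:ℕ)*(κ-κ)^1*1*deriv H κ + (κ-κ)^2*deriv (deriv H) κ)) κ :=
      (((dh₂ κ).hasDerivAt.const_mul 2).add
          ((((hasDerivAt_id κ).sub_const κ).const_mul 4).mul (dH κ).hasDerivAt)).add
        ((((hasDerivAt_id κ).sub_const κ).pow 2).mul (dH2 κ).hasDerivAt)
    rw [Q.deriv, hH2 κ]
    ring
  have hψ0 : HasDerivAt (fun z => z^2 * deriv (deriv g) z + z * deriv g z + (z^2 - c) * g z)
      0 κ := by
    have hz : (fun z => z^2 * deriv (deriv g) z + z * deriv g z + (z^2 - c) * g z)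
        = fun _ => (0:ℂ) := funext ode
    rw [hz]; exact hasDerivAt_const κ 0
  have hψD : HasDerivAt (fun z => z^2 * deriv (deriv g) z + z * deriv g z + (z^2 - c) * g z)
      (((2:ℕ)*κ^1 * deriv (deriv g) κ + κ^2 * deriv (deriv (deriv g)) κ)
        + (1 * deriv g κ + κ * deriv (deriv g) κ)
        + ((2:ℕ)*κ^1 * g κ + (κ^2 - c) * deriv g κ)) κ :=
    (((hasDerivAt_pow 2 κ).mul (hdg2 κ).hasDerivAt).add
        ((hasDerivAt_id κ).mul (hdg κ).hasDerivAt)).add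
      (((hasDerivAt_pow 2 κ).sub_const c).mul (hg κ).hasDerivAt)
  have hD0 := hψ0.unique hψD
  rw [hF2κ, hF3, haκ, hgκ] at hD0
  linear_combination -hD0 - 3*rel1


/-- local behavior of `g_p` around a zero `κ*` of `J_p`. -/
theorem stmt_10 (p : ℕ) (κs : ℝ) (hκs : 0 < κs)
    (hJ : besselJ p (κs : ℂ) = 0) (hJ' : besselJ' p (κs : ℂ) ≠ 0) :
    Filter.Tendsto
        (fun κ : ℂ => κ * (besselJ' p κ) ^ 2 * (κ - (κs : ℂ)) ^ 2 / (besselJ p κ) ^ 2)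
        (nhdsWithin (κs : ℂ) {(κs : ℂ)}ᶜ) (nhds (κs : ℂ)) ∧
    Filter.Tendsto
        (fun κ : ℂ =>
          (κ * (besselJ' p κ) ^ 2 * (κ - (κs : ℂ)) ^ 2 / (besselJ p κ) ^ 2 - (κs : ℂ))
            / (κ - (κs : ℂ)) ^ 2)
        (nhdsWithin (κs : ℂ) {(κs : ℂ)}ᶜ)
        (nhds (((-8 * κs ^ 2 + 8 * (p : ℝ) ^ 2 + 1) / (12 * κs) : ℝ) : ℂ)) := by
  have hκ0 : (κs:ℂ) ≠ 0 := Complex.ofReal_ne_zero.mpr (ne_of_gt hκs)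
  have hf := differentiable_besselJ p
  have hdf : Differentiable ℂ (deriv (besselJ p)) := entire_deriv hf
  have hdf2 : Differentiable ℂ (deriv (deriv (besselJ p))) := entire_deriv hdf
  have dh₁ : Differentiable ℂ (dslope (besselJ p) (κs:ℂ)) := entire_dslope hf _
  have dh₂ : Differentiable ℂ (dslope (dslope (besselJ p) (κs:ℂ)) (κs:ℂ)) :=
    entire_dslope dh₁ _
  have dH : Differentiable ℂ (deriv (dslope (dslope (besselJ p) (κs:ℂ)) (κs:ℂ))) :=
    entire_deriv dh₂
  have dH2 : Differentiable ℂ (deriv (deriv (dslope (dslope (besselJ p) (κs:ℂ)) (κs:ℂ)))) :=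
    entire_deriv dH
  have h1κ : dslope (besselJ p) (κs:ℂ) (κs:ℂ) = besselJ' p (κs:ℂ) := dslope_same _ _
  have I1 : ∀ z, besselJ p z = (z - (κs:ℂ)) * dslope (besselJ p) (κs:ℂ) z := by
    intro z
    have hs := sub_smul_dslope (besselJ p) (κs:ℂ) z
    rw [smul_eq_mul, hJ, sub_zero] at hs
    exact hs.symm
  have I2 : ∀ z, dslope (besselJ p) (κs:ℂ) z
      = besselJ' p (κs:ℂ) + (z - (κs:ℂ)) * dslope (dslope (besselJ p) (κs:ℂ)) (κs:ℂ) z := by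
    intro z
    have hs := sub_smul_dslope (dslope (besselJ p) (κs:ℂ)) (κs:ℂ) z
    rw [smul_eq_mul, h1κ] at hs
    linear_combination -hs
  have D1 := dslope_deriv_expand hf (κs:ℂ)
  have D2 := dslope_deriv_expand dh₁ (κs:ℂ)
  have E : ∀ z, deriv (besselJ p) z = besselJ' p (κs:ℂ)
      + 2*(z-(κs:ℂ))*dslope (dslope (besselJ p) (κs:ℂ)) (κs:ℂ) z
      + (z-(κs:ℂ))^2 * deriv (dslope (dslope (besselJ p) (κs:ℂ)) (κs:ℂ)) z := by
    intro z
    linear_combination (D1 z) + (z - (κs:ℂ)) * (D2 z) + (I2 z)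
  obtain ⟨rel1, rel2⟩ := rels_aux (c := (p:ℂ)^2) hκ0 hf hdf hdf2 dh₂ dH dH2 hJ rfl
    (fun z => rfl) E (besselJ_ode p)
  have haux := main_aux (b := 2 + (p:ℂ)^2 - (κs:ℂ)^2) hκ0 hJ' dh₁ dh₂ dH hdf h1κ rfl I1 I2 E
    rel1 rel2
  refine ⟨haux.1, ?_⟩
  have hval : (((-8 * κs ^ 2 + 8 * (p : ℝ) ^ 2 + 1) / (12 * κs) : ℝ) : ℂ)
      = (8*(2 + (p:ℂ)^2 - (κs:ℂ)^2) - 15)/(12*(κs:ℂ)) := by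
    push_cast
    ring
  rw [hval]
  exact haux.2
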